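/- Let V be a compact Hausdorff space with a finite Borel measure ω positive on open sets, and P an ω-partition of V. If Z ∈ C*(V) is a copositive kernel, then its averaging Z⋄P is copositive on V, and moreover, viewed as a finite matrix indexed by P × P (with the counting measure on P), Z⋄P is a copositive matrix: Σ_{X,Y ∈ P} (Z⋄P)(X,Y) φ(X)φ(Y) ≥ 0 for all nonnegative φ : P → ℝ. -/

import Mathlib

open MeasureTheory

/-- An `ω`-partition: a finite partition of `V` into measurable sets of positive measure. -/
def IsOmegaPartition {V : Type*} [MeasurableSpace V] (ω : Measure V)
    (P : Finset (Set V)) : Prop :=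
  (∀ X ∈ P, MeasurableSet X) ∧ (∀ X ∈ P, 0 < ω X) ∧
    (∀ X ∈ P, ∀ Y ∈ P, X ≠ Y → Disjoint X Y) ∧ (⋃ X ∈ P, X) = Set.univ

/-- The averaging `Z ⋄ P` of a kernel over an `ω`-partition, as a kernel on `V × V`. -/
noncomputable def avgKernel {V : Type*} [MeasurableSpace V] (ω : Measure V)
    (P : Finset (Set V)) (Z : V × V → ℝ) : V × V → ℝ := fun p =>
  ∑ X ∈ P, ∑ Y ∈ P,
    Set.indicator X (fun _ => (1 : ℝ)) p.1 * Set.indicator Y (fun _ => (1 : ℝ)) p.2 *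
      ((ω X).toReal⁻¹ * (ω Y).toReal⁻¹ * ∫ x in X, ∫ y in Y, Z (x, y) ∂ω ∂ω)

/-- The entry `(Z ⋄ P)(X, Y)` of the averaged kernel, viewed as a matrix on `P × P`. -/
noncomputable def avgEntry {V : Type*} [MeasurableSpace V] (ω : Measure V)
    (Z : V × V → ℝ) (X Y : Set V) : ℝ :=
  (ω X).toReal⁻¹ * (ω Y).toReal⁻¹ * ∫ x in X, ∫ y in Y, Z (x, y) ∂ω ∂ω

/-- `Z` belongs to the copositive cone `C*(V)`. -/
def IsCopositiveKernel {V : Type*} [MeasurableSpace V] (ω : Measure V)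
    (Z : V × V → ℝ) : Prop :=
  (∀ x y : V, Z (x, y) = Z (y, x)) ∧ MemLp Z 2 (ω.prod ω) ∧
    ∀ f : V → ℝ, 0 ≤ᵐ[ω] f → MemLp f 2 ω →
      0 ≤ ∫ p : V × V, Z p * (f p.1 * f p.2) ∂(ω.prod ω)



section Aux

variable {V : Type*} [MeasurableSpace V]

lemma indicator_prod_mul (X Y : Set V) (Z : V × V → ℝ) (p : V × V) :
    Set.indicator X (fun _ => (1 : ℝ)) p.1 * Set.indicator Y (fun _ => (1 : ℝ)) p.2 * Z p
      = (X ×ˢ Y).indicator Z p := by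
  by_cases h1 : p.1 ∈ X <;> by_cases h2 : p.2 ∈ Y <;>
    simp [Set.indicator_apply, h1, h2, Set.mem_prod]

lemma key_sum (ω : Measure V) [IsFiniteMeasure ω]
    (P : Finset (Set V)) (hmeas : ∀ X ∈ P, MeasurableSet X)
    (Z : V × V → ℝ) (hZint : Integrable Z (ω.prod ω)) (c : Set V → ℝ) :
    ∫ p : V × V, Z p * ((∑ X ∈ P, c X * Set.indicator X (fun _ => (1:ℝ)) p.1) *
        (∑ Y ∈ P, c Y * Set.indicator Y (fun _ => (1:ℝ)) p.2)) ∂(ω.prod ω)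
      = ∑ X ∈ P, ∑ Y ∈ P, c X * c Y * ∫ x in X, ∫ y in Y, Z (x, y) ∂ω ∂ω := by
  have hrw : ∀ p : V × V,
      Z p * ((∑ X ∈ P, c X * Set.indicator X (fun _ => (1:ℝ)) p.1) *
        (∑ Y ∈ P, c Y * Set.indicator Y (fun _ => (1:ℝ)) p.2))
      = ∑ X ∈ P, ∑ Y ∈ P, c X * c Y * (X ×ˢ Y).indicator Z p := by
    intro p
    rw [Finset.sum_mul_sum, Finset.mul_sum]
    refine Finset.sum_congr rfl fun X _ => ?_
    rw [Finset.mul_sum]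
    refine Finset.sum_congr rfl fun Y _ => ?_
    rw [← indicator_prod_mul X Y Z p]; ring
  simp_rw [hrw]
  rw [integral_finset_sum _ fun X hX => integrable_finset_sum _ fun Y hY =>
    ((hZint.indicator ((hmeas X hX).prod (hmeas Y hY))).const_mul _)]
  refine Finset.sum_congr rfl fun X hX => ?_
  rw [integral_finset_sum _ fun Y hY =>
    ((hZint.indicator ((hmeas X hX).prod (hmeas Y hY))).const_mul _)]
  refine Finset.sum_congr rfl fun Y hY => ?_
  rw [integral_const_mul, integral_indicator ((hmeas X hX).prod (hmeas Y hY)),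
    setIntegral_prod _ hZint.integrableOn]

lemma entry_symm (ω : Measure V) [IsFiniteMeasure ω] {X Y : Set V}
    (Z : V × V → ℝ) (hsym : ∀ x y : V, Z (x, y) = Z (y, x))
    (hZint : Integrable Z (ω.prod ω)) :
    ∫ x in X, ∫ y in Y, Z (x, y) ∂ω ∂ω = ∫ x in Y, ∫ y in X, Z (x, y) ∂ω ∂ω := by
  have h1 : ∀ a b : V, Z (a, b) = Z (b, a) := hsym
  calc ∫ x in X, ∫ y in Y, Z (x, y) ∂ω ∂ω
      = ∫ x in X, ∫ y in Y, Z (y, x) ∂ω ∂ω := by simp_rw [h1]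
    _ = ∫ y in Y, ∫ x in X, Z (y, x) ∂ω ∂ω := by
        refine (integral_integral_swap ?_).symm
        show Integrable (fun p : V × V => Z (p.1, p.2)) _
        have : (fun p : V × V => Z (p.1, p.2)) = Z := funext fun p => rfl
        rw [this, Measure.prod_restrict]
        exact hZint.integrableOn
    _ = ∫ x in Y, ∫ y in X, Z (x, y) ∂ω ∂ω := rfl

end Aux

theorem stmt_10' {V : Type*} [TopologicalSpace V] [CompactSpace V] [T2Space V]
    [MeasurableSpace V] [BorelSpace V]
    (ω : Measure V) [IsFiniteMeasure ω]
    (hpos : ∀ U : Set V, IsOpen U → U.Nonempty → 0 < ω U)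
    (P : Finset (Set V)) (hP : IsOmegaPartition ω P)
    (Z : V × V → ℝ) (hZ : IsCopositiveKernel ω Z) :
    IsCopositiveKernel ω (avgKernel ω P Z) ∧
      ∀ φ : Set V → ℝ, (∀ X ∈ P, 0 ≤ φ X) →
        0 ≤ ∑ X ∈ P, ∑ Y ∈ P, avgEntry ω Z X Y * (φ X * φ Y) := by
  obtain ⟨hmeas, hposP, hdisj, hcover⟩ := hP
  obtain ⟨hsym, hZ2, hZcop⟩ := hZ
  have hZint : Integrable Z (ω.prod ω) := hZ2.integrable (by norm_num)
  -- Matrix copositivity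
  have hmat : ∀ φ : Set V → ℝ, (∀ X ∈ P, 0 ≤ φ X) →
      0 ≤ ∑ X ∈ P, ∑ Y ∈ P, avgEntry ω Z X Y * (φ X * φ Y) := by
    intro φ hφ
    set c : Set V → ℝ := fun X => φ X * (ω X).toReal⁻¹ with hc
    set f : V → ℝ := fun v => ∑ X ∈ P, c X * Set.indicator X (fun _ => (1:ℝ)) v with hf
    have hfnn : 0 ≤ᵐ[ω] f := by
      refine Filter.Eventually.of_forall fun v => ?_
      refine Finset.sum_nonneg fun X hX => mul_nonneg
        (mul_nonneg (hφ X hX) (inv_nonneg.2 ENNReal.toReal_nonneg)) ?_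
      exact Set.indicator_nonneg (fun _ _ => zero_le_one) v
    have hf2 : MemLp f 2 ω := by
      refine memLp_finset_sum P fun X hX => ?_
      have : (fun v => c X * Set.indicator X (fun _ => (1:ℝ)) v)
          = fun v => Set.indicator X (fun _ => c X) v := by
        funext v
        by_cases h : v ∈ X <;> simp [Set.indicator_apply, h]
      rw [this]
      exact memLp_indicator_const 2 (hmeas X hX) _ (Or.inr (measure_ne_top ω X))
    have h0 := hZcop f hfnn hf2
    rw [show (fun p : V × V => Z p * (f p.1 * f p.2)) = fun p : V × V =>
        Z p * ((∑ X ∈ P, c X * Set.indicator X (fun _ => (1:ℝ)) p.1) *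
          (∑ Y ∈ P, c Y * Set.indicator Y (fun _ => (1:ℝ)) p.2)) from rfl,
      key_sum ω P hmeas Z hZint c] at h0
    refine h0.trans_eq (Finset.sum_congr rfl fun X _ => Finset.sum_congr rfl fun Y _ => ?_)
    simp only [hc, avgEntry]; ring
  refine ⟨⟨?_, ?_, ?_⟩, hmat⟩
  · -- symmetry
    intro x y
    unfold avgKernel
    rw [Finset.sum_comm]
    refine Finset.sum_congr rfl fun X _ => Finset.sum_congr rfl fun Y _ => ?_
    dsimp only
    rw [entry_symm ω Z hsym hZint (X := Y) (Y := X)]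
    ring
  · -- Memℒp
    unfold avgKernel
    refine memLp_finset_sum P fun X hX => memLp_finset_sum P fun Y hY => ?_
    have : (fun p : V × V => Set.indicator X (fun _ => (1:ℝ)) p.1 *
        Set.indicator Y (fun _ => (1:ℝ)) p.2 *
        ((ω X).toReal⁻¹ * (ω Y).toReal⁻¹ * ∫ x in X, ∫ y in Y, Z (x, y) ∂ω ∂ω))
        = fun p : V × V => (X ×ˢ Y).indicator
          (fun _ => (ω X).toReal⁻¹ * (ω Y).toReal⁻¹ * ∫ x in X, ∫ y in Y, Z (x, y) ∂ω ∂ω) p := by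
      funext p
      exact indicator_prod_mul X Y (fun _ => (ω X).toReal⁻¹ * (ω Y).toReal⁻¹ * ∫ x in X, ∫ y in Y, Z (x, y) ∂ω ∂ω) p
    rw [this]
    exact memLp_indicator_const 2 ((hmeas X hX).prod (hmeas Y hY)) _
      (Or.inr (measure_ne_top _ _))
  · -- copositivity of avgKernel
    intro f hfnn hf2
    have hfint : Integrable f ω := hf2.integrable (by norm_num)
    have hind : ∀ X ∈ P, Integrable (X.indicator f) ω := fun X hX =>
      hfint.indicator (hmeas X hX)
    have hcalc : ∫ p : V × V, avgKernel ω P Z p * (f p.1 * f p.2) ∂(ω.prod ω)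
        = ∑ X ∈ P, ∑ Y ∈ P, avgEntry ω Z X Y * ((∫ x in X, f x ∂ω) * (∫ y in Y, f y ∂ω)) := by
      have hrw : ∀ p : V × V, avgKernel ω P Z p * (f p.1 * f p.2)
          = ∑ X ∈ P, ∑ Y ∈ P, avgEntry ω Z X Y *
              (X.indicator f p.1 * Y.indicator f p.2) := by
        intro p
        unfold avgKernel
        rw [Finset.sum_mul]
        refine Finset.sum_congr rfl fun X _ => ?_
        rw [Finset.sum_mul]
        refine Finset.sum_congr rfl fun Y _ => ?_
        unfold avgEntry
        by_cases h1 : p.1 ∈ X <;> by_cases h2 : p.2 ∈ Y <;>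
          simp [Set.indicator_apply, h1, h2] <;> ring
      simp_rw [hrw]
      rw [integral_finset_sum _ fun X hX => integrable_finset_sum _ fun Y hY =>
        (((hind X hX).mul_prod (hind Y hY)).const_mul _)]
      refine Finset.sum_congr rfl fun X hX => ?_
      rw [integral_finset_sum _ fun Y hY =>
        (((hind X hX).mul_prod (hind Y hY)).const_mul _)]
      refine Finset.sum_congr rfl fun Y hY => ?_
      rw [integral_const_mul, integral_prod_mul,
        integral_indicator (hmeas X hX), integral_indicator (hmeas Y hY)]
    rw [hcalc]
    refine hmat (fun X => ∫ x in X, f x ∂ω) fun X hX => ?_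
    refine setIntegral_nonneg_ae (hmeas X hX) ?_
    filter_upwards [hfnn] with v hv _ using hv


/-- if `Z ∈ C*(V)`, then `Z⋄P` is copositive on `V` and, viewed as a
finite matrix indexed by `P × P`, is a copositive matrix. -/
theorem stmt_10 {V : Type*} [TopologicalSpace V] [CompactSpace V] [T2Space V]
    [MeasurableSpace V] [BorelSpace V]
    (ω : Measure V) [IsFiniteMeasure ω]
    (hpos : ∀ U : Set V, IsOpen U → U.Nonempty → 0 < ω U)
    (P : Finset (Set V)) (hP : IsOmegaPartition ω P)
    (Z : V × V → ℝ) (hZ : IsCopositiveKernel ω Z) :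
    IsCopositiveKernel ω (avgKernel ω P Z) ∧
      ∀ φ : Set V → ℝ, (∀ X ∈ P, 0 ≤ φ X) →
        0 ≤ ∑ X ∈ P, ∑ Y ∈ P, avgEntry ω Z X Y * (φ X * φ Y) := by
  exact stmt_10' ω hpos P hP Z hZ
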